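/- Suppose F ⊆ binomial([n],k) satisfies: for any ℓ distinct members F₁,…,F_ℓ of F, ∑_{i<j} |F_i ∩ F_j| ≥ binomial(ℓ,2)(t-1) + binomial(ℓ-1,2). Suppose F contains a sunflower with t-element kernel T and 2k+ℓ-2 petals, and let a, b ∈ T with a ≠ b. Then for any F, G ∈ F with F ∩ T = T ∖ {a} and G ∩ T = T ∖ {b}, we have |(F∖T) ∩ (G∖T)| ≥ ℓ - 1. -/
import Mathlib

open Finset

private lemma two_mul_choose_two (n : ℕ) : 2 * Nat.choose n 2 = n * (n - 1) := by
  induction n with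
  | zero => simp
  | succ m ih =>
    rw [Nat.choose_succ_succ, Nat.mul_add, ih, Nat.choose_one_right]
    cases m with
    | zero => simp
    | succ p => simp only [Nat.succ_sub_one]; ring

theorem stmt_8 (n k t ℓ : ℕ) (ht : 1 ≤ t) (hℓ : 3 ≤ ℓ) (hk : t + ℓ - 2 ≤ k)
    (hkn : k ≤ n)
    (F : Finset (Finset ℕ))
    (hF : ∀ A ∈ F, A ⊆ Finset.Icc 1 n ∧ A.card = k)
    (hcond : ∀ G : Fin ℓ → Finset ℕ, Function.Injective G → (∀ i, G i ∈ F) →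
      Nat.choose ℓ 2 * (t - 1) + Nat.choose (ℓ - 1) 2 ≤
        ∑ i : Fin ℓ, ∑ j : Fin ℓ, if i < j then (G i ∩ G j).card else 0)
    (T : Finset ℕ) (hT : T.card = t)
    (S : Finset (Finset ℕ)) (hSF : S ⊆ F) (hScard : S.card = 2 * k + ℓ - 2)
    (hsun : ∀ A ∈ S, ∀ B ∈ S, A ≠ B → A ∩ B = T)
    (a b : ℕ) (ha : a ∈ T) (hb : b ∈ T) (hab : a ≠ b)
    (X Y : Finset ℕ) (hX : X ∈ F) (hY : Y ∈ F)
    (hXT : X ∩ T = T.erase a) (hYT : Y ∩ T = T.erase b) :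
    ℓ - 1 ≤ ((X \ T) ∩ (Y \ T)).card := by
  set m := ((X \ T) ∩ (Y \ T)).card with hm
  -- basic facts
  have ht2 : 2 ≤ t := by
    have hsub : ({a, b} : Finset ℕ) ⊆ T := by
      intro x hx
      simp only [mem_insert, mem_singleton] at hx
      rcases hx with h | h <;> subst h <;> assumption
    have := Finset.card_le_card hsub
    rwa [Finset.card_pair hab, hT] at this
  have haX : a ∉ X := by
    intro h
    have h1 : a ∈ X ∩ T := Finset.mem_inter.mpr ⟨h, ha⟩
    rw [hXT] at h1
    exact (Finset.mem_erase.mp h1).1 rfl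
  have hbY : b ∉ Y := by
    intro h
    have h1 : b ∈ Y ∩ T := Finset.mem_inter.mpr ⟨h, hb⟩
    rw [hYT] at h1
    exact (Finset.mem_erase.mp h1).1 rfl
  have haY : a ∈ Y := by
    have h1 : a ∈ Y ∩ T := by rw [hYT]; exact Finset.mem_erase.mpr ⟨hab, ha⟩
    exact (Finset.mem_inter.mp h1).1
  have hXY : X ≠ Y := fun h => haX (h ▸ haY)
  have hTsub : ∀ A ∈ S, T ⊆ A := by
    intro A hA
    have h2 : 1 < S.card := by rw [hScard]; omega
    obtain ⟨B, hB, hBA⟩ := Finset.exists_mem_ne h2 A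
    rw [← hsun A hA B hB (Ne.symm hBA)]
    exact Finset.inter_subset_left
  have hXS : X ∉ S := fun h => haX (hTsub X h ha)
  have hYS : Y ∉ S := fun h => hbY (hTsub Y h hb)
  have hXcard : X.card = k := (hF X hX).2
  have hYcard : Y.card = k := (hF Y hY).2
  have hTea : (T.erase a).card = t - 1 := by rw [card_erase_of_mem ha, hT]
  have hTeb : (T.erase b).card = t - 1 := by rw [card_erase_of_mem hb, hT]
  have hXdT : (X \ T).card = k - (t - 1) := by
    have h1 := Finset.card_sdiff_add_card_inter X T
    rw [hXT, hTea, hXcard] at h1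
    omega
  have hYdT : (Y \ T).card = k - (t - 1) := by
    have h1 := Finset.card_sdiff_add_card_inter Y T
    rw [hYT, hTeb, hYcard] at h1
    omega
  -- few petals meet X \ T or Y \ T
  have hbad : ∀ Z : Finset ℕ,
      (S.filter (fun A => ((A \ T) ∩ (Z \ T)).Nonempty)).card ≤ (Z \ T).card := by
    intro Z
    have hdisj : ∀ A ∈ S.filter (fun A => ((A \ T) ∩ (Z \ T)).Nonempty),
        ∀ B ∈ S.filter (fun A => ((A \ T) ∩ (Z \ T)).Nonempty), A ≠ B →
        Disjoint ((A \ T) ∩ (Z \ T)) ((B \ T) ∩ (Z \ T)) := by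
      intro A hA B hB hAB
      rw [Finset.disjoint_left]
      intro x hx1 hx2
      have hxA : x ∈ A \ T := (Finset.mem_inter.mp hx1).1
      have hxB : x ∈ B \ T := (Finset.mem_inter.mp hx2).1
      have hxT : x ∈ T := by
        rw [← hsun A (mem_of_mem_filter A hA) B (mem_of_mem_filter B hB) hAB]
        exact Finset.mem_inter.mpr ⟨(Finset.mem_sdiff.mp hxA).1, (Finset.mem_sdiff.mp hxB).1⟩
      exact (Finset.mem_sdiff.mp hxA).2 hxT
    have hcb := Finset.card_biUnion hdisj
    have hsub : (S.filter (fun A => ((A \ T) ∩ (Z \ T)).Nonempty)).biUnion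
        (fun A => (A \ T) ∩ (Z \ T)) ⊆ Z \ T := by
      intro x hx
      obtain ⟨A, hA, hxA⟩ := Finset.mem_biUnion.mp hx
      exact (Finset.mem_inter.mp hxA).2
    have h1 : (S.filter (fun A => ((A \ T) ∩ (Z \ T)).Nonempty)).card
        ≤ ∑ A ∈ S.filter (fun A => ((A \ T) ∩ (Z \ T)).Nonempty), ((A \ T) ∩ (Z \ T)).card := by
      have h0 : (S.filter (fun A => ((A \ T) ∩ (Z \ T)).Nonempty)).card
          = ∑ _A ∈ S.filter (fun A => ((A \ T) ∩ (Z \ T)).Nonempty), 1 := by simp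
      rw [h0]
      apply Finset.sum_le_sum
      intro A hA
      exact Finset.card_pos.mpr (Finset.mem_filter.mp hA).2
    calc (S.filter (fun A => ((A \ T) ∩ (Z \ T)).Nonempty)).card
        ≤ ∑ A ∈ S.filter (fun A => ((A \ T) ∩ (Z \ T)).Nonempty), ((A \ T) ∩ (Z \ T)).card := h1
      _ = ((S.filter (fun A => ((A \ T) ∩ (Z \ T)).Nonempty)).biUnion
            (fun A => (A \ T) ∩ (Z \ T))).card := hcb.symm
      _ ≤ (Z \ T).card := Finset.card_le_card hsub
  -- good petals
  have hGDcard : ℓ - 2 ≤ (S \ (S.filter (fun A => ((A \ T) ∩ (X \ T)).Nonempty)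
      ∪ S.filter (fun A => ((A \ T) ∩ (Y \ T)).Nonempty))).card := by
    have h1 := Finset.card_sdiff_add_card_inter S
      (S.filter (fun A => ((A \ T) ∩ (X \ T)).Nonempty)
        ∪ S.filter (fun A => ((A \ T) ∩ (Y \ T)).Nonempty))
    have h2 : (S ∩ (S.filter (fun A => ((A \ T) ∩ (X \ T)).Nonempty)
        ∪ S.filter (fun A => ((A \ T) ∩ (Y \ T)).Nonempty))).card
        ≤ (S.filter (fun A => ((A \ T) ∩ (X \ T)).Nonempty)).card
          + (S.filter (fun A => ((A \ T) ∩ (Y \ T)).Nonempty)).card :=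
      le_trans (Finset.card_le_card Finset.inter_subset_right) (Finset.card_union_le _ _)
    have h3 := hbad X
    have h4 := hbad Y
    omega
  obtain ⟨P, hPGD, hPcard⟩ := Finset.exists_subset_card_eq hGDcard
  have hPS : ∀ A ∈ P, A ∈ S := fun A hA => (Finset.mem_sdiff.mp (hPGD hA)).1
  have hPX : ∀ A ∈ P, A ∩ X = T.erase a := by
    intro A hA
    have hAS := hPS A hA
    have hnb := (Finset.mem_sdiff.mp (hPGD hA)).2
    have hempty : (A \ T) ∩ (X \ T) = ∅ := by
      by_contra h
      exact hnb (Finset.mem_union_left _ (Finset.mem_filter.mpr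
        ⟨hAS, Finset.nonempty_iff_ne_empty.mpr h⟩))
    ext x
    constructor
    · intro hx
      obtain ⟨hxA, hxX⟩ := Finset.mem_inter.mp hx
      by_cases hxT : x ∈ T
      · rw [← hXT]; exact Finset.mem_inter.mpr ⟨hxX, hxT⟩
      · exfalso
        have hx2 : x ∈ (A \ T) ∩ (X \ T) :=
          Finset.mem_inter.mpr ⟨Finset.mem_sdiff.mpr ⟨hxA, hxT⟩, Finset.mem_sdiff.mpr ⟨hxX, hxT⟩⟩
        rw [hempty] at hx2
        exact absurd hx2 (Finset.notMem_empty x)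
    · intro hx
      have hxT : x ∈ T := Finset.mem_of_mem_erase hx
      refine Finset.mem_inter.mpr ⟨hTsub A hAS hxT, ?_⟩
      rw [← hXT] at hx
      exact (Finset.mem_inter.mp hx).1
  have hPY : ∀ A ∈ P, A ∩ Y = T.erase b := by
    intro A hA
    have hAS := hPS A hA
    have hnb := (Finset.mem_sdiff.mp (hPGD hA)).2
    have hempty : (A \ T) ∩ (Y \ T) = ∅ := by
      by_contra h
      exact hnb (Finset.mem_union_right _ (Finset.mem_filter.mpr
        ⟨hAS, Finset.nonempty_iff_ne_empty.mpr h⟩))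
    ext x
    constructor
    · intro hx
      obtain ⟨hxA, hxY⟩ := Finset.mem_inter.mp hx
      by_cases hxT : x ∈ T
      · rw [← hYT]; exact Finset.mem_inter.mpr ⟨hxY, hxT⟩
      · exfalso
        have hx2 : x ∈ (A \ T) ∩ (Y \ T) :=
          Finset.mem_inter.mpr ⟨Finset.mem_sdiff.mpr ⟨hxA, hxT⟩, Finset.mem_sdiff.mpr ⟨hxY, hxT⟩⟩
        rw [hempty] at hx2
        exact absurd hx2 (Finset.notMem_empty x)
    · intro hx
      have hxT : x ∈ T := Finset.mem_of_mem_erase hx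
      refine Finset.mem_inter.mpr ⟨hTsub A hAS hxT, ?_⟩
      rw [← hYT] at hx
      exact (Finset.mem_inter.mp hx).1
  have hXP : X ∉ P := fun h => hXS (hPS X h)
  have hYP : Y ∉ P := fun h => hYS (hPS Y h)
  clear hPGD
  -- intersection cards
  have gAX : ∀ A ∈ P, (A ∩ X).card = t - 1 := fun A hA => by rw [hPX A hA, hTea]
  have gAY : ∀ A ∈ P, (A ∩ Y).card = t - 1 := fun A hA => by rw [hPY A hA, hTeb]
  have gAB : ∀ A ∈ P, ∀ B ∈ P, A ≠ B → (A ∩ B).card = t :=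
    fun A hA B hB h => by rw [hsun A (hPS A hA) B (hPS B hB) h, hT]
  have hXYcard : (X ∩ Y).card = (t - 2) + m := by
    have h1 : (X ∩ Y) ∩ T = (T.erase a).erase b := by
      have h0 : (X ∩ Y) ∩ T = (X ∩ T) ∩ (Y ∩ T) := by
        ext x; simp only [Finset.mem_inter]; tauto
      rw [h0, hXT, hYT]
      ext x; simp only [Finset.mem_inter, Finset.mem_erase]; tauto
    have h2 : (X ∩ Y) \ T = (X \ T) ∩ (Y \ T) := by
      ext x; simp only [Finset.mem_sdiff, Finset.mem_inter]; tauto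
    have h3 := Finset.card_sdiff_add_card_inter (X ∩ Y) T
    rw [h1, h2] at h3
    have h4 : ((T.erase a).erase b).card = t - 2 := by
      rw [card_erase_of_mem (Finset.mem_erase.mpr ⟨Ne.symm hab, hb⟩), hTea]
      omega
    omega
  -- the family Q = insert X (insert Y P)
  have hXiYP : X ∉ insert Y P := by
    simp only [Finset.mem_insert]
    push_neg
    exact ⟨hXY, hXP⟩
  have hQcard : (insert X (insert Y P)).card = ℓ := by
    rw [Finset.card_insert_of_notMem hXiYP, Finset.card_insert_of_notMem hYP, hPcard]
    omega
  have hQF : ∀ A ∈ insert X (insert Y P), A ∈ F := by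
    intro A hA
    simp only [Finset.mem_insert] at hA
    rcases hA with h | h | h
    · exact h ▸ hX
    · exact h ▸ hY
    · exact hSF (hPS A h)
  -- enumerate Q
  have e : Fin ℓ ≃ {x // x ∈ insert X (insert Y P)} :=
    (((insert X (insert Y P)).equivFin).trans (finCongr hQcard)).symm
  have hGinj : Function.Injective (fun i : Fin ℓ => ((e i : {x // x ∈ insert X (insert Y P)})
      : Finset ℕ)) := fun i j h => e.injective (Subtype.ext h)
  set G : Fin ℓ → Finset ℕ := fun i => ((e i : {x // x ∈ insert X (insert Y P)}) : Finset ℕ)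
    with hGdef
  have hGmem : ∀ i, G i ∈ insert X (insert Y P) := fun i => (e i).2
  have hsumG : ∀ φ : Finset ℕ → ℕ, ∑ i : Fin ℓ, φ (G i) = ∑ A ∈ insert X (insert Y P), φ A := by
    intro φ
    rw [← Finset.sum_coe_sort (insert X (insert Y P)) φ]
    exact Fintype.sum_equiv e _ _ (fun i => rfl)
  -- apply hcond
  have hcondG := hcond G hGinj (fun i => hQF _ (hGmem i))
  -- symmetrize
  have hsym : ∑ i : Fin ℓ, ∑ j : Fin ℓ, (if i < j then (G i ∩ G j).card else 0)
      = ∑ i : Fin ℓ, ∑ j : Fin ℓ, (if j < i then (G i ∩ G j).card else 0) := by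
    rw [Finset.sum_comm]
    exact Finset.sum_congr rfl fun i _ => Finset.sum_congr rfl fun j _ => by
      rw [Finset.inter_comm]
  have hdouble : 2 * (∑ i : Fin ℓ, ∑ j : Fin ℓ, (if i < j then (G i ∩ G j).card else 0))
      = ∑ i : Fin ℓ, ∑ j : Fin ℓ, (if i ≠ j then (G i ∩ G j).card else 0) := by
    rw [two_mul]
    nth_rewrite 2 [hsym]
    rw [← Finset.sum_add_distrib]
    refine Finset.sum_congr rfl fun i _ => ?_
    rw [← Finset.sum_add_distrib]
    refine Finset.sum_congr rfl fun j _ => ?_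
    rcases lt_trichotomy i j with h | h | h
    · simp [h, asymm h, h.ne]
    · simp [h]
    · simp [h, asymm h, h.ne']
  -- reindex to Q
  have hstep : ∑ i : Fin ℓ, ∑ j : Fin ℓ, (if i ≠ j then (G i ∩ G j).card else 0)
      = ∑ A ∈ insert X (insert Y P), ∑ B ∈ insert X (insert Y P),
          (if A ≠ B then (A ∩ B).card else 0) := by
    have h1 : ∀ i : Fin ℓ, ∑ j : Fin ℓ, (if i ≠ j then (G i ∩ G j).card else 0)
        = ∑ B ∈ insert X (insert Y P), (if G i ≠ B then (G i ∩ B).card else 0) := by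
      intro i
      rw [← hsumG (fun B => if G i ≠ B then (G i ∩ B).card else 0)]
      refine Finset.sum_congr rfl fun j _ => ?_
      by_cases h : i = j
      · subst h; simp
      · rw [if_pos h, if_pos (hGinj.ne_iff.mpr h)]
    calc ∑ i : Fin ℓ, ∑ j : Fin ℓ, (if i ≠ j then (G i ∩ G j).card else 0)
        = ∑ i : Fin ℓ, ∑ B ∈ insert X (insert Y P), (if G i ≠ B then (G i ∩ B).card else 0) :=
          Finset.sum_congr rfl fun i _ => h1 i
      _ = _ := hsumG (fun A => ∑ B ∈ insert X (insert Y P), (if A ≠ B then (A ∩ B).card else 0))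
  -- compute the sum over Q
  have hinner : ∀ A : Finset ℕ, ∑ B ∈ insert X (insert Y P), (if A ≠ B then (A ∩ B).card else 0)
      = (if A ≠ X then (A ∩ X).card else 0)
        + ((if A ≠ Y then (A ∩ Y).card else 0)
          + ∑ B ∈ P, (if A ≠ B then (A ∩ B).card else 0)) := by
    intro A
    rw [Finset.sum_insert hXiYP, Finset.sum_insert hYP]
  have hfX : ∑ B ∈ insert X (insert Y P), (if X ≠ B then (X ∩ B).card else 0)
      = ((t - 2) + m) + (ℓ - 2) * (t - 1) := by
    have hPsum : ∑ B ∈ P, (if X ≠ B then (X ∩ B).card else 0) = (ℓ - 2) * (t - 1) := by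
      have hc : ∀ B ∈ P, (if X ≠ B then (X ∩ B).card else 0) = t - 1 := by
        intro B hB
        rw [if_pos (show X ≠ B by rintro rfl; exact hXP hB), Finset.inter_comm X B, gAX B hB]
      rw [Finset.sum_congr rfl hc, Finset.sum_const, hPcard, smul_eq_mul]
    rw [hinner X, if_neg (show ¬X ≠ X from fun h => h rfl), if_pos hXY, hXYcard, hPsum]
    omega
  have hfY : ∑ B ∈ insert X (insert Y P), (if Y ≠ B then (Y ∩ B).card else 0)
      = ((t - 2) + m) + (ℓ - 2) * (t - 1) := by
    have hPsum : ∑ B ∈ P, (if Y ≠ B then (Y ∩ B).card else 0) = (ℓ - 2) * (t - 1) := by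
      have hc : ∀ B ∈ P, (if Y ≠ B then (Y ∩ B).card else 0) = t - 1 := by
        intro B hB
        rw [if_pos (show Y ≠ B by rintro rfl; exact hYP hB), Finset.inter_comm Y B, gAY B hB]
      rw [Finset.sum_congr rfl hc, Finset.sum_const, hPcard, smul_eq_mul]
    rw [hinner Y, if_pos (Ne.symm hXY), if_neg (show ¬Y ≠ Y from fun h => h rfl),
      Finset.inter_comm Y X, hXYcard, hPsum]
    omega
  have hfP : ∀ A ∈ P, ∑ B ∈ insert X (insert Y P), (if A ≠ B then (A ∩ B).card else 0)
      = (t - 1) + ((t - 1) + (ℓ - 3) * t) := by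
    intro A hA
    have hPsum : ∑ B ∈ P, (if A ≠ B then (A ∩ B).card else 0) = (ℓ - 3) * t := by
      rw [← Finset.add_sum_erase P _ hA, if_neg (show ¬A ≠ A from fun h => h rfl)]
      have hc : ∀ B ∈ P.erase A, (if A ≠ B then (A ∩ B).card else 0) = t := by
        intro B hB
        have hBA : A ≠ B := Ne.symm (Finset.ne_of_mem_erase hB)
        rw [if_pos hBA, gAB A hA B (Finset.mem_of_mem_erase hB) hBA]
      rw [Finset.sum_congr rfl hc, Finset.sum_const, Finset.card_erase_of_mem hA, hPcard,
        smul_eq_mul, zero_add]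
      have he : ℓ - 2 - 1 = ℓ - 3 := by omega
      rw [he]
    rw [hinner A, if_pos (show A ≠ X by rintro rfl; exact hXP hA),
      if_pos (show A ≠ Y by rintro rfl; exact hYP hA), gAX A hA, gAY A hA, hPsum]
  have hsumQ : ∑ A ∈ insert X (insert Y P), ∑ B ∈ insert X (insert Y P),
        (if A ≠ B then (A ∩ B).card else 0)
      = 2 * ((t - 2) + m) + 2 * ((ℓ - 2) * (t - 1))
        + (ℓ - 2) * ((t - 1) + ((t - 1) + (ℓ - 3) * t)) := by
    rw [Finset.sum_insert hXiYP, Finset.sum_insert hYP, hfX, hfY,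
      Finset.sum_congr rfl hfP, Finset.sum_const, hPcard, smul_eq_mul]
    ring
  -- assemble
  have htotal : 2 * (Nat.choose ℓ 2 * (t - 1) + Nat.choose (ℓ - 1) 2)
      ≤ 2 * ((t - 2) + m) + 2 * ((ℓ - 2) * (t - 1))
        + (ℓ - 2) * ((t - 1) + ((t - 1) + (ℓ - 3) * t)) := by
    rw [← hsumQ, ← hstep, ← hdouble]
    exact Nat.mul_le_mul_left 2 hcondG
  clear hcondG hsumQ hstep hdouble hsym hsumG hGmem hGinj hinner hfX hfY hfP
  obtain ⟨L, rfl⟩ : ∃ L, ℓ = L + 3 := ⟨ℓ - 3, by omega⟩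
  obtain ⟨s, rfl⟩ : ∃ s, t = s + 2 := ⟨t - 2, by omega⟩
  have c1 : 2 * Nat.choose (L + 3) 2 = (L + 3) * (L + 2) := by
    rw [two_mul_choose_two]; congr 1
  have c2 : 2 * Nat.choose (L + 2) 2 = (L + 2) * (L + 1) := by
    rw [two_mul_choose_two]; congr 1
  have hfin : (L + 3) * (L + 2) * (s + 1) + (L + 2) * (L + 1)
      ≤ 2 * (s + m) + 2 * ((L + 1) * (s + 1))
        + (L + 1) * ((s + 1) + ((s + 1) + L * (s + 2))) := by
    calc (L + 3) * (L + 2) * (s + 1) + (L + 2) * (L + 1)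
        = 2 * (Nat.choose (L + 3) 2 * (s + 1) + Nat.choose (L + 2) 2) := by
          have hr : 2 * (Nat.choose (L + 3) 2 * (s + 1) + Nat.choose (L + 2) 2)
              = (2 * Nat.choose (L + 3) 2) * (s + 1) + 2 * Nat.choose (L + 2) 2 := by ring
          rw [hr, c1, c2]
      _ ≤ _ := htotal
  have hid : 2 * (s + m) + 2 * ((L + 1) * (s + 1))
        + (L + 1) * ((s + 1) + ((s + 1) + L * (s + 2))) + 2 * (L + 2)
      = (L + 3) * (L + 2) * (s + 1) + (L + 2) * (L + 1) + 2 * m := by ring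
  omega
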